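/- Suppose ν = ν^θ < κ ≤ 2^ν for infinite cardinals, and cf(κ) ≥ θ. Then there exists a colouring c : [κ]² → θ such that for every cofinal B ⊆ κ there exists η < ν with c[{η} ⊛ B] = θ. -/

import Mathlib

open Cardinal Ordinal Set

theorem stmt_13 (θ ν κ : Cardinal) (hθ : ℵ₀ ≤ θ) (hν : ℵ₀ ≤ ν) (hκ : ℵ₀ ≤ κ)
    (hpow : ν ^ θ = ν) (h1 : ν < κ) (h2 : κ ≤ 2 ^ ν) (hcf : θ ≤ (κ.ord).cof) :
    ∃ c : Ordinal → Ordinal → Ordinal,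
      (∀ α β : Ordinal, α < β → β < κ.ord → c α β < θ.ord) ∧
      ∀ B : Set Ordinal, B ⊆ Set.Iio κ.ord → (∀ α < κ.ord, ∃ β ∈ B, α ≤ β) →
        ∃ η < ν.ord, ∀ τ < θ.ord, ∃ β ∈ B, η < β ∧ c η β = τ := by
  classical
  have hθ0 : θ ≠ 0 := (aleph0_pos.trans_le hθ).ne'
  have hν0 : ν ≠ 0 := (aleph0_pos.trans_le hν).ne'
  have hκ0 : κ ≠ 0 := (aleph0_pos.trans_le hκ).ne'
  have hθpos : (0 : Ordinal) < θ.ord := by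
    rw [← Cardinal.ord_zero, Cardinal.ord_lt_ord]
    exact pos_iff_ne_zero.mpr hθ0
  have hT : #θ.ord.ToType = θ := by rw [Cardinal.mk_toType, Cardinal.card_ord]
  have hV : #ν.ord.ToType = ν := by rw [Cardinal.mk_toType, Cardinal.card_ord]
  have hK : #κ.ord.ToType = κ := by rw [Cardinal.mk_toType, Cardinal.card_ord]
  have hTne : Nonempty θ.ord.ToType := by
    rw [Ordinal.nonempty_toType_iff]
    simp [Cardinal.ord_eq_zero, hθ0]
  have hVne : Nonempty ν.ord.ToType := by
    rw [Ordinal.nonempty_toType_iff]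
    simp [Cardinal.ord_eq_zero, hν0]
  -- injection of κ into characteristic functions on ν
  obtain ⟨F⟩ : Nonempty (κ.ord.ToType ↪ (ν.ord.ToType → Bool)) := by
    rw [← Cardinal.le_def, hK]
    have harr : #(ν.ord.ToType → Bool) = 2 ^ ν := by
      rw [Cardinal.mk_arrow, Cardinal.lift_uzero, hV]
      simp
    rw [harr]
    exact h2
  -- pairing equivalence on θ
  obtain ⟨pe⟩ : Nonempty (θ.ord.ToType ≃ θ.ord.ToType × θ.ord.ToType) := by
    rw [← Cardinal.eq, Cardinal.mk_prod, Cardinal.lift_id, hT, Cardinal.mul_eq_self hθ]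
  -- decoding of ν into pairs (g, e)
  set P := (θ.ord.ToType → ν.ord.ToType) ×
      (θ.ord.ToType → (θ.ord.ToType → Bool) × θ.ord.ToType) with hPdef
  have h2θ : (2 : Cardinal) ^ θ ≤ ν := by
    calc (2 : Cardinal) ^ θ ≤ ν ^ θ := by
          refine Cardinal.power_le_power_right ?_
          exact (Cardinal.nat_lt_aleph0 2).le.trans hν
      _ = ν := hpow
  have hPle : #P ≤ #ν.ord.ToType := by
    rw [hV, hPdef, Cardinal.mk_prod, Cardinal.lift_id, Cardinal.lift_id]
    have e1 : #(θ.ord.ToType → ν.ord.ToType) = ν := by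
      rw [← Cardinal.power_def, hV, hT, hpow]
    have e2 : #(θ.ord.ToType → (θ.ord.ToType → Bool) × θ.ord.ToType) ≤ ν := by
      have harr2 : #(θ.ord.ToType → Bool) = 2 ^ θ := by
        rw [Cardinal.mk_arrow, Cardinal.lift_uzero, hT]
        simp
      rw [← Cardinal.power_def, Cardinal.mk_prod]
      simp only [Cardinal.lift_id]
      rw [harr2, hT]
      have hmul : (2 : Cardinal) ^ θ * θ = 2 ^ θ :=
        Cardinal.mul_eq_left (hθ.trans (Cardinal.cantor θ).le) (Cardinal.cantor θ).le hθ0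
      rw [hmul, ← Cardinal.power_mul, Cardinal.mul_eq_self hθ]
      exact h2θ
    calc #(θ.ord.ToType → ν.ord.ToType) *
          #(θ.ord.ToType → (θ.ord.ToType → Bool) × θ.ord.ToType)
        ≤ ν * ν := by
          refine mul_le_mul' (le_of_eq e1) e2
      _ = ν := Cardinal.mul_eq_self hν
  have hPne : Nonempty P := by
    refine ⟨⟨fun _ => Classical.arbitrary _, fun s => ⟨fun _ => false, s⟩⟩⟩
  obtain ⟨emb⟩ : Nonempty (P ↪ ν.ord.ToType) := Cardinal.le_def _ _ |>.mp hPle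
  set dec : ν.ord.ToType → P := Function.invFun emb with hdecdef
  have hdec : Function.Surjective dec := Function.invFun_surjective emb.injective
  set toT := Ordinal.ToType.mk (o := θ.ord) with htoT
  set toV := Ordinal.ToType.mk (o := ν.ord) with htoV
  set toK := Ordinal.ToType.mk (o := κ.ord) with htoK
  refine ⟨fun η β =>
    if h : η < ν.ord ∧ β < κ.ord then
      (if hs : ∃ s, ((dec (toV ⟨η, h.1⟩)).2 s).1 =
          (fun u => F (toK ⟨β, h.2⟩) ((dec (toV ⟨η, h.1⟩)).1 u)) then
        ((toT.symm ((dec (toV ⟨η, h.1⟩)).2 hs.choose).2 : Set.Iio θ.ord) : Ordinal) else 0)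
    else 0, ?_, ?_⟩
  · intro α β hαβ hβ
    dsimp only
    split_ifs with h1' h2'
    · exact (toT.symm _).2
    · exact hθpos
    · exact hθpos
  · intro B hB1 hB2
    have hνκ : ν.ord < κ.ord := Cardinal.ord_lt_ord.mpr h1
    have hlim : Order.IsSuccLimit (κ.ord) := Cardinal.isSuccLimit_ord hκ
    set S : Set κ.ord.ToType :=
      {x | ((toK.symm x : Set.Iio κ.ord) : Ordinal) ∈ B ∧
        ν.ord ≤ ((toK.symm x : Set.Iio κ.ord) : Ordinal)} with hSdef
    -- S has at least θ many elements
    have hθS : θ ≤ #S := by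
      by_contra hcon
      push_neg at hcon
      have hcard : #S < (κ.ord).cof := hcon.trans_le hcf
      set f : S → Ordinal := fun x => ((toK.symm x.1 : Set.Iio κ.ord) : Ordinal) with hf
      have hbdd : ∀ i : S, f i < κ.ord := fun i => (toK.symm i.1).2
      have hsup : (⨆ i : S, f i) < κ.ord := Ordinal.iSup_lt_ord hcard hbdd
      have hsucc : (⨆ i : S, f i) + 1 < κ.ord := by
        have h10 := hlim.succ_lt hsup
        rwa [← Ordinal.add_one_eq_succ] at h10
      have hmax : max ν.ord ((⨆ i : S, f i) + 1) < κ.ord := max_lt hνκ hsucc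
      obtain ⟨β, hβB, hβge⟩ := hB2 _ hmax
      have hβκ : β < κ.ord := hB1 hβB
      have hxS : toK ⟨β, hβκ⟩ ∈ S := by
        rw [hSdef]
        constructor
        · rw [OrderIso.symm_apply_apply]
          exact hβB
        · rw [OrderIso.symm_apply_apply]
          exact (le_max_left _ _).trans hβge
      have hle : f ⟨toK ⟨β, hβκ⟩, hxS⟩ ≤ ⨆ i : S, f i := by
        refine le_ciSup ?_ (⟨toK ⟨β, hβκ⟩, hxS⟩ : S)
        exact ⟨κ.ord, by rintro _ ⟨i, rfl⟩; exact (hbdd i).le⟩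
      have hfval : f ⟨toK ⟨β, hβκ⟩, hxS⟩ = β := by
        rw [hf]
        dsimp only
        rw [OrderIso.symm_apply_apply]
      rw [hfval] at hle
      have hgeb : (⨆ i : S, f i) + 1 ≤ β := (le_max_right _ _).trans hβge
      have hcontr : (⨆ i : S, f i) + 1 ≤ ⨆ i : S, f i := hgeb.trans hle
      rw [Ordinal.add_one_eq_succ] at hcontr
      exact lt_irrefl _ (Order.succ_le_iff.mp hcontr)
    obtain ⟨b⟩ : Nonempty (θ.ord.ToType ↪ S) := by
      rw [← Cardinal.le_def, hT]
      exact hθS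
    -- the chosen elements, as ordinals
    set bord : θ.ord.ToType → Ordinal :=
      fun s => ((toK.symm (b s).1 : Set.Iio κ.ord) : Ordinal) with hbord
    have hbB : ∀ s, bord s ∈ B := fun s => (b s).2.1
    have hbν : ∀ s, ν.ord ≤ bord s := fun s => (b s).2.2
    have hbK : ∀ s, bord s < κ.ord := fun s => (toK.symm (b s).1).2
    set bel : θ.ord.ToType → κ.ord.ToType := fun s => (b s : κ.ord.ToType) with hbel
    have hbelinj : Function.Injective bel := fun s s' h => b.injective (Subtype.ext h)
    have hbelK : ∀ s, toK ⟨bord s, hbK s⟩ = bel s := by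
      intro s
      have h9 : (⟨bord s, hbK s⟩ : Set.Iio κ.ord) = toK.symm (bel s) := Subtype.ext rfl
      rw [h9, OrderIso.apply_symm_apply]
    -- separating function
    set sep : θ.ord.ToType × θ.ord.ToType → ν.ord.ToType := fun q =>
      if h : ∃ v, F (bel q.1) v ≠ F (bel q.2) v then h.choose else Classical.arbitrary _
      with hsep
    set g : θ.ord.ToType → ν.ord.ToType := fun u => sep (pe u) with hg
    set t : θ.ord.ToType → θ.ord.ToType → Bool := fun s u => F (bel s) (g u) with ht
    have tinj : Function.Injective t := by
      intro s s' hss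
      by_contra hne
      have hFne : F (bel s) ≠ F (bel s') := fun h => hne (hbelinj (F.injective h))
      have hex : ∃ v, F (bel s) v ≠ F (bel s') v := by
        by_contra hno
        push_neg at hno
        exact hFne (funext hno)
      have hval : t s (pe.symm (s, s')) ≠ t s' (pe.symm (s, s')) := by
        rw [ht]
        dsimp only
        rw [hg]
        dsimp only
        rw [Equiv.apply_symm_apply, hsep]
        dsimp only
        rw [dif_pos hex]
        exact hex.choose_spec
      exact hval (by rw [hss])
    set e : θ.ord.ToType → (θ.ord.ToType → Bool) × θ.ord.ToType := fun s => (t s, s) with he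
    obtain ⟨v0, hv0⟩ := hdec (⟨g, e⟩ : P)
    refine ⟨((toV.symm v0 : Set.Iio ν.ord) : Ordinal), (toV.symm v0).2, ?_⟩
    intro τ hτ
    set s : θ.ord.ToType := toT ⟨τ, hτ⟩ with hs
    have hηβ : ((toV.symm v0 : Set.Iio ν.ord) : Ordinal) < bord s :=
      lt_of_lt_of_le (toV.symm v0).2 (hbν s)
    refine ⟨bord s, hbB s, hηβ, ?_⟩
    have hcond : (((toV.symm v0 : Set.Iio ν.ord) : Ordinal) < ν.ord ∧
        bord s < κ.ord) := ⟨(toV.symm v0).2, hbK s⟩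
    dsimp only
    rw [dif_pos hcond]
    have hved : toV ⟨((toV.symm v0 : Set.Iio ν.ord) : Ordinal), hcond.1⟩ = v0 := by
      have h9 : (⟨((toV.symm v0 : Set.Iio ν.ord) : Ordinal), hcond.1⟩ : Set.Iio ν.ord)
          = toV.symm v0 := Subtype.ext rfl
      rw [h9, OrderIso.apply_symm_apply]
    rw [hved, hv0]
    have htr : (fun u => F (toK ⟨bord s, hcond.2⟩) ((⟨g, e⟩ : P).1 u)) = t s := by
      funext u
      exact congrArg (fun x => F x ((⟨g, e⟩ : P).1 u)) (hbelK s)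
    have hex : ∃ s₀, (((⟨g, e⟩ : P).2 s₀).1) =
        (fun u => F (toK ⟨bord s, hcond.2⟩) ((⟨g, e⟩ : P).1 u)) := ⟨s, htr.symm⟩
    rw [dif_pos hex]
    have hch : hex.choose = s := tinj (hex.choose_spec.trans htr)
    rw [hch]
    show ((toT.symm (toT ⟨τ, hτ⟩) : Set.Iio θ.ord) : Ordinal) = τ
    rw [OrderIso.symm_apply_apply]
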